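/- arXiv:2301.07092 — 4 statements merged into one kernel-verified Lean document; each statement's English description precedes it below -/
import Mathlib

section
/- Let D ⊆ R^3 be open, v ∈ C^2(D; C^3), and α ∈ C^1(D; SPD(3)). Then pointwise in D: 2Re{(∇×v)·(α v̄ × x)} = ∇·[2Re{(v·x)α v̄} − (α v·v̄)x] − 2Re{(v·x)∇·[α v̄]} + (α + (x·∇)α)v·v̄. -/
open scoped BigOperators
open Complex

noncomputable section

abbrev V3 := Fin 3 → ℂ

/-- Coerce a real vector to a complex vector. -/
def toC (x : Fin 3 → ℝ) : V3 := fun i => (x i : ℂ)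

/-- Bilinear (unconjugated) dot product on `ℂ³`. -/
def dotc (a b : V3) : ℂ := ∑ i, a i * b i

/-- Componentwise complex conjugation. -/
def cjv (v : V3) : V3 := fun i => (starRingEnd ℂ) (v i)

/-- Apply a real 3×3 matrix to a complex vector. -/
def mapp (M : Fin 3 → Fin 3 → ℝ) (v : V3) : V3 := fun i => ∑ j, (M i j : ℂ) * v j

/-- Sesquilinear form `M v · w̄ = ∑ᵢⱼ Mᵢⱼ vⱼ w̄ᵢ`. -/
def qf (M : Fin 3 → Fin 3 → ℝ) (v w : V3) : ℂ := ∑ i, mapp M v i * (starRingEnd ℂ) (w i)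

/-- Squared Euclidean norm `|v|²` of a complex vector. -/
def n2 (v : V3) : ℝ := ∑ i, Complex.normSq (v i)

/-- Symmetry of a real 3×3 matrix. -/
def IsSymm3 (M : Fin 3 → Fin 3 → ℝ) : Prop := ∀ i j, M i j = M j i

/-- Positive definiteness of a real 3×3 matrix, as a quadratic form on `ℂ³`. -/
def IsPos3 (M : Fin 3 → Fin 3 → ℝ) : Prop := ∀ v : V3, v ≠ 0 → 0 < (qf M v v).re

/-- Partial derivative `∂ᵢF` of a vector field. -/
def pdv (F : (Fin 3 → ℝ) → V3) (i : Fin 3) (x : Fin 3 → ℝ) : V3 :=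
  fderiv ℝ F x (Pi.single i 1)

/-- Divergence `∇·F` of a complex vector field. -/
def divg (F : (Fin 3 → ℝ) → V3) (x : Fin 3 → ℝ) : ℂ := ∑ i, pdv F i x i

/-- Curl `∇×F` of a complex vector field. -/
def curl3 (F : (Fin 3 → ℝ) → V3) (x : Fin 3 → ℝ) : V3 :=
  fun i => pdv F (i + 1) x (i + 2) - pdv F (i + 2) x (i + 1)

/-- Gradient of a real scalar field. -/
def gradR (β : (Fin 3 → ℝ) → ℝ) (x : Fin 3 → ℝ) : Fin 3 → ℝ :=
  fun i => fderiv ℝ β x (Pi.single i 1)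

section RellichHelpers

lemma fdadd (f g : (Fin 3 → ℝ) → ℂ) (x u : Fin 3 → ℝ)
    (hf : DifferentiableAt ℝ f x) (hg : DifferentiableAt ℝ g x) :
    fderiv ℝ (fun y => f y + g y) x u = fderiv ℝ f x u + fderiv ℝ g x u := by
  rw [fderiv_fun_add hf hg]; rfl

lemma fdsub (f g : (Fin 3 → ℝ) → ℂ) (x u : Fin 3 → ℝ)
    (hf : DifferentiableAt ℝ f x) (hg : DifferentiableAt ℝ g x) :
    fderiv ℝ (fun y => f y - g y) x u = fderiv ℝ f x u - fderiv ℝ g x u := by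
  rw [fderiv_fun_sub hf hg]; rfl

lemma fdmul (f g : (Fin 3 → ℝ) → ℂ) (x u : Fin 3 → ℝ)
    (hf : DifferentiableAt ℝ f x) (hg : DifferentiableAt ℝ g x) :
    fderiv ℝ (fun y => f y * g y) x u = fderiv ℝ f x u * g x + f x * fderiv ℝ g x u := by
  rw [fderiv_fun_mul hf hg]
  simp [ContinuousLinearMap.add_apply, ContinuousLinearMap.smul_apply]
  ring

lemma fdsum {ι : Type*} (s : Finset ι) (f : ι → (Fin 3 → ℝ) → ℂ) (x u : Fin 3 → ℝ)
    (hf : ∀ i ∈ s, DifferentiableAt ℝ (f i) x) :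
    fderiv ℝ (fun y => ∑ i ∈ s, f i y) x u = ∑ i ∈ s, fderiv ℝ (f i) x u := by
  rw [fderiv_fun_sum hf]; simp

lemma fdconj (f : (Fin 3 → ℝ) → ℂ) (x u : Fin 3 → ℝ) (hf : DifferentiableAt ℝ f x) :
    fderiv ℝ (fun y => (starRingEnd ℂ) (f y)) x u = (starRingEnd ℂ) (fderiv ℝ f x u) := by
  have h : (fun y => (starRingEnd ℂ) (f y)) = (Complex.conjCLE : ℂ → ℂ) ∘ f := rfl
  rw [h, ContinuousLinearEquiv.comp_fderiv]; rfl

lemma fdofReal (f : (Fin 3 → ℝ) → ℝ) (x u : Fin 3 → ℝ) (hf : DifferentiableAt ℝ f x) :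
    fderiv ℝ (fun y => ((f y : ℝ) : ℂ)) x u = ((fderiv ℝ f x u : ℝ) : ℂ) := by
  have h : HasFDerivAt (fun y => ((f y : ℝ) : ℂ)) (Complex.ofRealCLM.comp (fderiv ℝ f x)) x :=
    (Complex.ofRealCLM.hasFDerivAt (x := f x)).comp x hf.hasFDerivAt
  rw [h.fderiv]; rfl

lemma fdcoordC (j : Fin 3) (x u : Fin 3 → ℝ) :
    fderiv ℝ (fun y : Fin 3 → ℝ => ((y j : ℝ) : ℂ)) x u = ((u j : ℝ) : ℂ) := by
  rw [fdofReal (fun y => y j) x u ((ContinuousLinearMap.proj j : (Fin 3 → ℝ) →L[ℝ] ℝ).differentiableAt)]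
  have h : fderiv ℝ (fun y : Fin 3 → ℝ => y j) x = (ContinuousLinearMap.proj j : (Fin 3 → ℝ) →L[ℝ] ℝ) :=
    (ContinuousLinearMap.proj j : (Fin 3 → ℝ) →L[ℝ] ℝ).fderiv
  rw [h]; rfl

lemma dconj (f : (Fin 3 → ℝ) → ℂ) (x : Fin 3 → ℝ) (hf : DifferentiableAt ℝ f x) :
    DifferentiableAt ℝ (fun y => (starRingEnd ℂ) (f y)) x :=
  (Complex.conjCLE.differentiableAt).comp x hf

lemma dofReal (f : (Fin 3 → ℝ) → ℝ) (x : Fin 3 → ℝ) (hf : DifferentiableAt ℝ f x) :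
    DifferentiableAt ℝ (fun y => ((f y : ℝ) : ℂ)) x :=
  (Complex.ofRealCLM.differentiableAt).comp x hf

lemma dcoordC (j : Fin 3) (x : Fin 3 → ℝ) :
    DifferentiableAt ℝ (fun y : Fin 3 → ℝ => ((y j : ℝ) : ℂ)) x :=
  dofReal (fun y => y j) x ((ContinuousLinearMap.proj j : (Fin 3 → ℝ) →L[ℝ] ℝ).differentiableAt)

lemma clm_apply_sum (g : (Fin 3 → ℝ) →L[ℝ] ℝ) (x : Fin 3 → ℝ) :
    g x = ∑ i, x i * g (Pi.single i 1) := by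
  have h : x = ∑ i : Fin 3, x i • (Pi.single i 1 : Fin 3 → ℝ) := by
    funext j
    simp [Pi.single_apply, Finset.sum_apply]
  conv_lhs => rw [h]
  simp

end RellichHelpers

set_option maxHeartbeats 2000000 in
/-- the pointwise Rellich-multiplier identity
`2Re{(∇×v)·(αv̄×x)} = ∇·[2Re{(v·x)αv̄} − (αv·v̄)x] − 2Re{(v·x)∇·[αv̄]} + (α+(x·∇)α)v·v̄`. -/

theorem stmt2 (D : Set (Fin 3 → ℝ)) (hD : IsOpen D)
    (v : (Fin 3 → ℝ) → V3) (hv : ContDiffOn ℝ 2 v D)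
    (α : (Fin 3 → ℝ) → Fin 3 → Fin 3 → ℝ) (hα : ContDiffOn ℝ 1 α D)
    (hsym : ∀ x ∈ D, IsSymm3 (α x)) (hpos : ∀ x ∈ D, IsPos3 (α x)) :
    ∀ x ∈ D,
      ((2 * (dotc (curl3 v x) (crossProduct (mapp (α x) (cjv (v x))) (toC x))).re : ℝ) : ℂ)
      = divg (fun y i =>
            ((2 * (dotc (v y) (toC y) * mapp (α y) (cjv (v y)) i).re : ℝ) : ℂ)
              - qf (α y) (v y) (v y) * (y i : ℂ)) x
        - ((2 * (dotc (v x) (toC x) * divg (fun y => mapp (α y) (cjv (v y))) x).re : ℝ) : ℂ)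
        + qf (fun i j => α x i j + fderiv ℝ α x x i j) (v x) (v x) := by
  intro x hx
  have hx2 : D ∈ nhds x := hD.mem_nhds hx
  have hvd : DifferentiableAt ℝ v x :=
    (hv.contDiffAt hx2).differentiableAt (by norm_num)
  have had : DifferentiableAt ℝ α x :=
    (hα.contDiffAt hx2).differentiableAt one_ne_zero
  have hV : ∀ j, DifferentiableAt ℝ (fun y => v y j) x := fun j =>
    ((ContinuousLinearMap.proj j : V3 →L[ℝ] ℂ).differentiableAt).comp x hvd
  have hArow : ∀ k, DifferentiableAt ℝ (fun y => α y k) x := fun k =>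
    ((ContinuousLinearMap.proj k : (Fin 3 → Fin 3 → ℝ) →L[ℝ] (Fin 3 → ℝ)).differentiableAt).comp x had
  have hA : ∀ k j, DifferentiableAt ℝ (fun y => α y k j) x := fun k j =>
    ((ContinuousLinearMap.proj j : (Fin 3 → ℝ) →L[ℝ] ℝ).differentiableAt).comp x (hArow k)
  have hAC : ∀ k j, DifferentiableAt ℝ (fun y => ((α y k j : ℝ) : ℂ)) x := fun k j =>
    dofReal _ x (hA k j)
  have hVc : ∀ j, DifferentiableAt ℝ (fun y => (starRingEnd ℂ) (v y j)) x := fun j =>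
    dconj _ x (hV j)
  have hpdv : ∀ (F : (Fin 3 → ℝ) → V3), (∀ j, DifferentiableAt ℝ (fun y => F y j) x) →
      ∀ i j, pdv F i x j = fderiv ℝ (fun y => F y j) x (Pi.single i 1) := by
    intro F hF i j
    have h : fderiv ℝ F x = ContinuousLinearMap.pi (fun j => fderiv ℝ (fun y => F y j) x) :=
      fderiv_pi hF
    simp [pdv, h]
  have hW : ∀ k, DifferentiableAt ℝ (fun y => mapp (α y) (cjv (v y)) k) x := by
    intro k
    have h : (fun y => mapp (α y) (cjv (v y)) k)
        = fun y => ∑ j, ((α y k j : ℝ) : ℂ) * (starRingEnd ℂ) (v y j) := rfl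
    rw [h]
    exact DifferentiableAt.fun_sum fun j _ => (hAC k j).mul (hVc j)
  have hC : DifferentiableAt ℝ (fun y => dotc (v y) (toC y)) x := by
    have h : (fun y => dotc (v y) (toC y)) = fun y => ∑ j, v y j * ((y j : ℝ) : ℂ) := rfl
    rw [h]
    exact DifferentiableAt.fun_sum fun j _ => (hV j).mul (dcoordC j x)
  have hQrow : ∀ k, DifferentiableAt ℝ (fun y => ∑ j, ((α y k j : ℝ) : ℂ) * v y j) x := fun k =>
    DifferentiableAt.fun_sum fun j _ => (hAC k j).mul (hV j)
  have hQ : DifferentiableAt ℝ (fun y => qf (α y) (v y) (v y)) x := by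
    have h : (fun y => qf (α y) (v y) (v y))
        = fun y => ∑ k, (∑ j, ((α y k j : ℝ) : ℂ) * v y j) * (starRingEnd ℂ) (v y k) := rfl
    rw [h]
    exact DifferentiableAt.fun_sum fun k _ => (hQrow k).mul (hVc k)
  -- derivative of w components
  have hwD : ∀ i k, fderiv ℝ (fun y => mapp (α y) (cjv (v y)) k) x (Pi.single i 1)
      = ∑ j, (((fderiv ℝ (fun y => α y k j) x (Pi.single i 1) : ℝ) : ℂ) * (starRingEnd ℂ) (v x j)
          + ((α x k j : ℝ) : ℂ) * (starRingEnd ℂ) (fderiv ℝ (fun y => v y j) x (Pi.single i 1))) := by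
    intro i k
    have h : (fun y => mapp (α y) (cjv (v y)) k)
        = fun y => ∑ j, ((α y k j : ℝ) : ℂ) * (starRingEnd ℂ) (v y j) := rfl
    rw [h, fdsum _ _ x _ (fun j _ => (hAC k j).fun_mul (hVc j))]
    refine Finset.sum_congr rfl fun j _ => ?_
    rw [fdmul _ _ x _ (hAC k j) (hVc j), fdofReal _ x _ (hA k j), fdconj _ x _ (hV j)]
  -- derivative of c
  have hcD : ∀ i, fderiv ℝ (fun y => dotc (v y) (toC y)) x (Pi.single i 1)
      = (∑ j, fderiv ℝ (fun y => v y j) x (Pi.single i 1) * ((x j : ℝ) : ℂ)) + v x i := by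
    intro i
    have h : (fun y => dotc (v y) (toC y)) = fun y => ∑ j, v y j * ((y j : ℝ) : ℂ) := rfl
    rw [h, fdsum _ _ x _ (fun j _ => (hV j).fun_mul (dcoordC j x))]
    have h2 : ∀ j : Fin 3, fderiv ℝ (fun y => v y j * ((y j : ℝ) : ℂ)) x (Pi.single i 1)
        = fderiv ℝ (fun y => v y j) x (Pi.single i 1) * ((x j : ℝ) : ℂ)
          + v x j * (((Pi.single i 1 : Fin 3 → ℝ) j : ℝ) : ℂ) := fun j => by
      rw [fdmul _ _ x _ (hV j) (dcoordC j x), fdcoordC]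
    simp only [h2]
    rw [Finset.sum_add_distrib]
    congr 1
    simp [Pi.single_apply, apply_ite (fun r : ℝ => (r : ℂ))]
  -- derivative of q
  have hqD : ∀ i, fderiv ℝ (fun y => qf (α y) (v y) (v y)) x (Pi.single i 1)
      = ∑ k, ((∑ j, (((fderiv ℝ (fun y => α y k j) x (Pi.single i 1) : ℝ) : ℂ) * v x j
              + ((α x k j : ℝ) : ℂ) * fderiv ℝ (fun y => v y j) x (Pi.single i 1)))
            * (starRingEnd ℂ) (v x k)
          + (∑ j, ((α x k j : ℝ) : ℂ) * v x j)
            * (starRingEnd ℂ) (fderiv ℝ (fun y => v y k) x (Pi.single i 1))) := by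
    intro i
    have h : (fun y => qf (α y) (v y) (v y))
        = fun y => ∑ k, (∑ j, ((α y k j : ℝ) : ℂ) * v y j) * (starRingEnd ℂ) (v y k) := rfl
    rw [h, fdsum _ _ x _ (fun k _ => (hQrow k).fun_mul (hVc k))]
    refine Finset.sum_congr rfl fun k _ => ?_
    rw [fdmul _ _ x _ (hQrow k) (hVc k), fdconj _ x _ (hV k),
        fdsum _ _ x _ (fun j _ => (hAC k j).fun_mul (hV j))]
    congr 2
    refine Finset.sum_congr rfl fun j _ => ?_
    rw [fdmul _ _ x _ (hAC k j) (hV j), fdofReal _ x _ (hA k j)]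
  -- curl components
  have hcurl : ∀ i, curl3 v x i
      = fderiv ℝ (fun y => v y (i + 2)) x (Pi.single (i + 1) 1)
        - fderiv ℝ (fun y => v y (i + 1)) x (Pi.single (i + 2) 1) := by
    intro i
    show pdv v (i + 1) x (i + 2) - pdv v (i + 2) x (i + 1) = _
    rw [hpdv v hV, hpdv v hV]
  -- divergence of α v̄
  have hdivw : divg (fun y => mapp (α y) (cjv (v y))) x
      = ∑ i, fderiv ℝ (fun y => mapp (α y) (cjv (v y)) i) x (Pi.single i 1) := by
    unfold divg
    exact Finset.sum_congr rfl fun i _ => hpdv _ hW i i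
  -- fderiv of α at x in direction x
  have hax : ∀ k j, fderiv ℝ α x x k j
      = ∑ i, x i * fderiv ℝ (fun y => α y k j) x (Pi.single i 1) := by
    intro k j
    have h1 : fderiv ℝ α x = ContinuousLinearMap.pi (fun k => fderiv ℝ (fun y => α y k) x) :=
      fderiv_pi hArow
    have h2 : fderiv ℝ (fun y => α y k) x
        = ContinuousLinearMap.pi (fun j => fderiv ℝ (fun y => α y k j) x) := fderiv_pi (hA k)
    have h3 : fderiv ℝ α x x k j = fderiv ℝ (fun y => α y k j) x x := by
      rw [h1]
      simp only [ContinuousLinearMap.pi_apply]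
      rw [h2]
      simp only [ContinuousLinearMap.pi_apply]
    rw [h3, clm_apply_sum]
  -- symmetry facts
  have hdas : ∀ (u : Fin 3 → ℝ) k j, fderiv ℝ (fun y => α y k j) x u
      = fderiv ℝ (fun y => α y j k) x u := by
    intro u k j
    have h : (fun y => α y k j) =ᶠ[nhds x] (fun y => α y j k) :=
      Filter.eventually_of_mem hx2 (fun y hy => hsym y hy k j)
    rw [h.fderiv_eq]
  have s10 : α x 1 0 = α x 0 1 := hsym x hx 1 0
  have s20 : α x 2 0 = α x 0 2 := hsym x hx 2 0
  have s21 : α x 2 1 = α x 1 2 := hsym x hx 2 1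
  have d10 : ∀ u, fderiv ℝ (fun y => α y 1 0) x u = fderiv ℝ (fun y => α y 0 1) x u :=
    fun u => hdas u 1 0
  have d20 : ∀ u, fderiv ℝ (fun y => α y 2 0) x u = fderiv ℝ (fun y => α y 0 2) x u :=
    fun u => hdas u 2 0
  have d21 : ∀ u, fderiv ℝ (fun y => α y 2 1) x u = fderiv ℝ (fun y => α y 1 2) x u :=
    fun u => hdas u 2 1
  -- the big divergence field
  have hFeq : ∀ i : Fin 3,
      (fun y => ((2 * (dotc (v y) (toC y) * mapp (α y) (cjv (v y)) i).re : ℝ) : ℂ)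
        - qf (α y) (v y) (v y) * ((y i : ℝ) : ℂ))
      = fun y => (dotc (v y) (toC y) * mapp (α y) (cjv (v y)) i
          + (starRingEnd ℂ) (dotc (v y) (toC y) * mapp (α y) (cjv (v y)) i))
          - qf (α y) (v y) (v y) * ((y i : ℝ) : ℂ) := by
    intro i
    funext y
    rw [Complex.add_conj]
  have hFd : ∀ i : Fin 3, DifferentiableAt ℝ
      (fun y => ((2 * (dotc (v y) (toC y) * mapp (α y) (cjv (v y)) i).re : ℝ) : ℂ)
        - qf (α y) (v y) (v y) * ((y i : ℝ) : ℂ)) x := by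
    intro i
    rw [hFeq i]
    exact ((hC.mul (hW i)).add (dconj _ x (hC.mul (hW i)))).sub (hQ.mul (dcoordC i x))
  have hdivF : divg (fun y i =>
        ((2 * (dotc (v y) (toC y) * mapp (α y) (cjv (v y)) i).re : ℝ) : ℂ)
          - qf (α y) (v y) (v y) * ((y i : ℝ) : ℂ)) x
      = ∑ i, fderiv ℝ
          (fun y => ((2 * (dotc (v y) (toC y) * mapp (α y) (cjv (v y)) i).re : ℝ) : ℂ)
            - qf (α y) (v y) (v y) * ((y i : ℝ) : ℂ)) x (Pi.single i 1) := by
    unfold divg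
    exact Finset.sum_congr rfl fun i _ => hpdv _ hFd i i
  have hFderiv : ∀ i : Fin 3, fderiv ℝ
      (fun y => ((2 * (dotc (v y) (toC y) * mapp (α y) (cjv (v y)) i).re : ℝ) : ℂ)
        - qf (α y) (v y) (v y) * ((y i : ℝ) : ℂ)) x (Pi.single i 1)
      = (fderiv ℝ (fun y => dotc (v y) (toC y)) x (Pi.single i 1) * mapp (α x) (cjv (v x)) i
          + dotc (v x) (toC x) * fderiv ℝ (fun y => mapp (α y) (cjv (v y)) i) x (Pi.single i 1))
        + (starRingEnd ℂ)
            (fderiv ℝ (fun y => dotc (v y) (toC y)) x (Pi.single i 1) * mapp (α x) (cjv (v x)) i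
            + dotc (v x) (toC x) * fderiv ℝ (fun y => mapp (α y) (cjv (v y)) i) x (Pi.single i 1))
        - (fderiv ℝ (fun y => qf (α y) (v y) (v y)) x (Pi.single i 1) * ((x i : ℝ) : ℂ)
          + qf (α x) (v x) (v x) * (((Pi.single i 1 : Fin 3 → ℝ) i : ℝ) : ℂ)) := by
    intro i
    rw [hFeq i,
        fdsub _ _ x _ ((hC.fun_mul (hW i)).fun_add (dconj _ x (hC.fun_mul (hW i)))) (hQ.fun_mul (dcoordC i x)),
        fdadd _ _ x _ (hC.fun_mul (hW i)) (dconj _ x (hC.fun_mul (hW i))),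
        fdconj _ x _ (hC.fun_mul (hW i)),
        fdmul _ _ x _ hC (hW i),
        fdmul _ _ x _ hQ (dcoordC i x),
        fdcoordC]
  -- assemble
  rw [← Complex.add_conj, ← Complex.add_conj, hdivF, hdivw]
  simp only [hFderiv, hcD, hwD, hqD, Pi.single_eq_same]
  simp only [dotc, qf, mapp, cjv, toC, cross_apply, Fin.sum_univ_three, hax, hcurl,
    Matrix.cons_val_zero, Matrix.cons_val_one, Matrix.head_cons, Matrix.cons_val_two,
    Matrix.tail_cons, Fin.reduceAdd, map_add, map_mul, map_sub, Complex.conj_conj,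
    Complex.conj_ofReal, s10, s20, s21, d10, d20, d21]
  push_cast
  ring
end
end

section
/- Let D ⊆ R^3 be open, E, H ∈ C^2(D; C^3), ε, μ ∈ C^1(D; Sym(3,R)), and β ∈ C^1(D; R). Then the following Morawetz-type identity holds pointwise in D: 2Re{(∇×E − iωμH)·(ε Ē × x + β H̄) + (∇×H + iωεE)·(μ H̄ × x − β Ē)} = ∇·[2Re{(E·x)ε Ē + (H·x)μ H̄ + β E × H̄} − (εE·Ē)x − (μH·H̄)x] − 2Re{(E·x)∇·[εĒ] + (H·x)∇·[μH̄] + ∇β·(E×H̄)} + (ε + (x·∇)ε)E·Ē + (μ + (x·∇)μ)H·H̄. -/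
open scoped BigOperators
open Complex

noncomputable section

/- ### Auxiliary machinery for partial derivatives. -/

/-- `f` has partial derivatives `d k` at `x`. -/
def HasPD {W : Type} [NormedAddCommGroup W] [NormedSpace ℝ W]
    (f : (Fin 3 → ℝ) → W) (x : Fin 3 → ℝ) (d : Fin 3 → W) : Prop :=
  ∃ L : (Fin 3 → ℝ) →L[ℝ] W, HasFDerivAt f L x ∧ ∀ k, L (Pi.single k 1) = d k

namespace HasPD

variable {W : Type} [NormedAddCommGroup W] [NormedSpace ℝ W]
variable {x : Fin 3 → ℝ} {f g : (Fin 3 → ℝ) → W} {d e : Fin 3 → W}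

theorem congr_fun (h : HasPD f x d) (hg : ∀ y, g y = f y) : HasPD g x d := by
  have : g = f := funext hg
  rwa [this]

theorem diffAt (h : HasPD f x d) : DifferentiableAt ℝ f x := h.choose_spec.1.differentiableAt

theorem fderiv_single (h : HasPD f x d) (k : Fin 3) :
    fderiv ℝ f x (Pi.single k 1) = d k := by
  obtain ⟨L, hL, hLk⟩ := h
  rw [hL.fderiv]; exact hLk k

theorem add (hf : HasPD f x d) (hg : HasPD g x e) :
    HasPD (fun y => f y + g y) x (fun k => d k + e k) := by
  obtain ⟨L, hL, hLk⟩ := hf; obtain ⟨M, hM, hMk⟩ := hg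
  exact ⟨L + M, hL.add hM, fun k => by simp [hLk, hMk]⟩

theorem sub (hf : HasPD f x d) (hg : HasPD g x e) :
    HasPD (fun y => f y - g y) x (fun k => d k - e k) := by
  obtain ⟨L, hL, hLk⟩ := hf; obtain ⟨M, hM, hMk⟩ := hg
  exact ⟨L - M, hL.sub hM, fun k => by simp [hLk, hMk]⟩

theorem mul {f g : (Fin 3 → ℝ) → ℂ} {d e : Fin 3 → ℂ}
    (hf : HasPD f x d) (hg : HasPD g x e) :
    HasPD (fun y => f y * g y) x (fun k => d k * g x + f x * e k) := by
  obtain ⟨L, hL, hLk⟩ := hf; obtain ⟨M, hM, hMk⟩ := hg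
  refine ⟨f x • M + g x • L, hL.mul hM, fun k => by simp [hLk, hMk]; ring⟩

theorem const (c : W) : HasPD (fun _ => c) x (fun _ => 0) :=
  ⟨0, hasFDerivAt_const c x, fun _ => rfl⟩

theorem sum {ι : Type} [DecidableEq ι] (s : Finset ι) {f : ι → (Fin 3 → ℝ) → W}
    {d : ι → Fin 3 → W} (h : ∀ j ∈ s, HasPD (f j) x (d j)) :
    HasPD (fun y => ∑ j ∈ s, f j y) x (fun k => ∑ j ∈ s, d j k) := by
  classical
  induction s using Finset.induction_on with
  | empty => simpa using const (x := x) (0 : W)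
  | insert a s hns ih =>
    have h1 := (h a (Finset.mem_insert_self a s)).add
      (ih (fun j hj => h j (Finset.mem_insert_of_mem hj)))
    have e1 : (fun y => ∑ j ∈ insert a s, f j y) = fun y => f a y + ∑ j ∈ s, f j y := by
      funext y; rw [Finset.sum_insert hns]
    have e2 : (fun k => ∑ j ∈ insert a s, d j k) = fun k => d a k + ∑ j ∈ s, d j k := by
      funext k; rw [Finset.sum_insert hns]
    rw [e1, e2]; exact h1

theorem conj {f : (Fin 3 → ℝ) → ℂ} {d : Fin 3 → ℂ} (hf : HasPD f x d) :
    HasPD (fun y => (starRingEnd ℂ) (f y)) x (fun k => (starRingEnd ℂ) (d k)) := by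
  obtain ⟨L, hL, hLk⟩ := hf
  exact ⟨(Complex.conjCLE.toContinuousLinearMap).comp L,
    (Complex.conjCLE.toContinuousLinearMap.hasFDerivAt).comp x hL,
    fun k => by simp [hLk]⟩

theorem two_re {f : (Fin 3 → ℝ) → ℂ} {d : Fin 3 → ℂ} (hf : HasPD f x d) :
    HasPD (fun y => ((2 * (f y).re : ℝ) : ℂ)) x (fun k => ((2 * (d k).re : ℝ) : ℂ)) := by
  obtain ⟨L, hL, hLk⟩ := hf
  exact ⟨(Complex.ofRealCLM.comp ((2 : ℝ) • Complex.reCLM)).comp L,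
    ((Complex.ofRealCLM.comp ((2 : ℝ) • Complex.reCLM)).hasFDerivAt).comp x hL,
    fun k => by simp [hLk]⟩

theorem ofReal {g : (Fin 3 → ℝ) → ℝ} {d : Fin 3 → ℝ} (hg : HasPD g x d) :
    HasPD (fun y => ((g y : ℝ) : ℂ)) x (fun k => ((d k : ℝ) : ℂ)) := by
  obtain ⟨L, hL, hLk⟩ := hg
  exact ⟨Complex.ofRealCLM.comp L, (Complex.ofRealCLM.hasFDerivAt).comp x hL,
    fun k => by simp [hLk]⟩

theorem coord (j : Fin 3) :
    HasPD (fun y : Fin 3 → ℝ => ((y j : ℝ) : ℂ)) x (fun k => if j = k then 1 else 0) := by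
  refine ⟨Complex.ofRealCLM.comp (ContinuousLinearMap.proj (R := ℝ) (φ := fun _ : Fin 3 => ℝ) j),
    (Complex.ofRealCLM.hasFDerivAt).comp x ?_, fun k => ?_⟩
  · exact (ContinuousLinearMap.proj (R := ℝ) (φ := fun _ : Fin 3 => ℝ) j).hasFDerivAt
  · simp [Pi.single_apply]
    split <;> simp_all

end HasPD

theorem pdv_comp {F : (Fin 3 → ℝ) → V3} {x : Fin 3 → ℝ} {dv : Fin 3 → Fin 3 → ℂ}
    (h : ∀ j, HasPD (fun y => F y j) x (dv j)) (i j : Fin 3) :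
    pdv F i x j = dv j i := by
  have hd : ∀ j : Fin 3, DifferentiableAt ℝ (fun y => F y j) x := fun j => (h j).diffAt
  have hpi : fderiv ℝ F x = ContinuousLinearMap.pi fun j => fderiv ℝ (fun y => F y j) x :=
    fderiv_pi hd
  rw [pdv, hpi]
  exact (h j).fderiv_single i

theorem divg_eq3 (F : (Fin 3 → ℝ) → V3) {x : Fin 3 → ℝ} {d0 d1 d2 : Fin 3 → ℂ}
    (h0 : HasPD (fun y => F y 0) x d0) (h1 : HasPD (fun y => F y 1) x d1)
    (h2 : HasPD (fun y => F y 2) x d2) :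
    divg F x = d0 0 + d1 1 + d2 2 := by
  have h : ∀ j : Fin 3, HasPD (fun y => F y j) x (![d0, d1, d2] j) := by
    intro j; fin_cases j; exacts [h0, h1, h2]
  rw [divg, Fin.sum_univ_three, pdv_comp h, pdv_comp h, pdv_comp h]
  rfl

theorem clm_apply_vec {W : Type} [NormedAddCommGroup W] [NormedSpace ℝ W]
    (L : (Fin 3 → ℝ) →L[ℝ] W) (v : Fin 3 → ℝ) :
    L v = ∑ k, v k • L (Pi.single k 1) := by
  have hv : v = ∑ k, v k • (Pi.single k (1 : ℝ) : Fin 3 → ℝ) := by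
    funext j
    simp [Pi.single_apply, Finset.sum_apply]
  conv_lhs => rw [hv]
  rw [map_sum]
  simp

set_option maxHeartbeats 4000000

/-- the first Morawetz-type identity (Lemma 2.1 of the paper), pointwise in `D`. -/
theorem stmt3 (D : Set (Fin 3 → ℝ)) (hD : IsOpen D) (ω : ℝ) (hω : 0 < ω)
    (E H : (Fin 3 → ℝ) → V3) (hE : ContDiffOn ℝ 2 E D) (hH : ContDiffOn ℝ 2 H D)
    (ε μ : (Fin 3 → ℝ) → Fin 3 → Fin 3 → ℝ)
    (hε : ContDiffOn ℝ 1 ε D) (hμ : ContDiffOn ℝ 1 μ D)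
    (hεsym : ∀ x ∈ D, IsSymm3 (ε x)) (hμsym : ∀ x ∈ D, IsSymm3 (μ x))
    (β : (Fin 3 → ℝ) → ℝ) (hβ : ContDiffOn ℝ 1 β D) :
    ∀ x ∈ D,
      ((2 * (dotc (fun i => curl3 E x i - Complex.I * ω * mapp (μ x) (H x) i)
                  (fun i => crossProduct (mapp (ε x) (cjv (E x))) (toC x) i
                              + (β x : ℂ) * cjv (H x) i)
              + dotc (fun i => curl3 H x i + Complex.I * ω * mapp (ε x) (E x) i)
                  (fun i => crossProduct (mapp (μ x) (cjv (H x))) (toC x) i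
                              - (β x : ℂ) * cjv (E x) i)).re : ℝ) : ℂ)
      = divg (fun y i =>
            ((2 * (dotc (E y) (toC y) * mapp (ε y) (cjv (E y)) i
                    + dotc (H y) (toC y) * mapp (μ y) (cjv (H y)) i
                    + (β y : ℂ) * crossProduct (E y) (cjv (H y)) i).re : ℝ) : ℂ)
              - qf (ε y) (E y) (E y) * (y i : ℂ)
              - qf (μ y) (H y) (H y) * (y i : ℂ)) x
        - ((2 * (dotc (E x) (toC x) * divg (fun y => mapp (ε y) (cjv (E y))) x
                  + dotc (H x) (toC x) * divg (fun y => mapp (μ y) (cjv (H y))) x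
                  + dotc (toC (gradR β x)) (crossProduct (E x) (cjv (H x)))).re : ℝ) : ℂ)
        + qf (fun i j => ε x i j + fderiv ℝ ε x x i j) (E x) (E x)
        + qf (fun i j => μ x i j + fderiv ℝ μ x x i j) (H x) (H x) := by
  intro x hx
  have hnx : D ∈ nhds x := hD.mem_nhds hx
  have hEx : DifferentiableAt ℝ E x :=
    (hE.differentiableOn (by norm_num)).differentiableAt hnx
  have hHx : DifferentiableAt ℝ H x :=
    (hH.differentiableOn (by norm_num)).differentiableAt hnx
  have hεx : DifferentiableAt ℝ ε x :=
    (hε.differentiableOn (by norm_num)).differentiableAt hnx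
  have hμx : DifferentiableAt ℝ μ x :=
    (hμ.differentiableOn (by norm_num)).differentiableAt hnx
  have hβx : DifferentiableAt ℝ β x :=
    (hβ.differentiableOn (by norm_num)).differentiableAt hnx
  -- basic partial-derivative facts
  have hA : ∀ j, HasPD (fun y => E y j) x
      (fun k => fderiv ℝ (fun y => E y j) x (Pi.single k 1)) :=
    fun j => ⟨_, (differentiableAt_pi.1 hEx j).hasFDerivAt, fun _ => rfl⟩
  have hB : ∀ j, HasPD (fun y => H y j) x
      (fun k => fderiv ℝ (fun y => H y j) x (Pi.single k 1)) :=
    fun j => ⟨_, (differentiableAt_pi.1 hHx j).hasFDerivAt, fun _ => rfl⟩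
  have hpR : ∀ i j, HasPD (fun y => ε y i j) x
      (fun k => fderiv ℝ (fun y => ε y i j) x (Pi.single k 1)) :=
    fun i j => ⟨_, (differentiableAt_pi.1 (differentiableAt_pi.1 hεx i) j).hasFDerivAt,
      fun _ => rfl⟩
  have hqR : ∀ i j, HasPD (fun y => μ y i j) x
      (fun k => fderiv ℝ (fun y => μ y i j) x (Pi.single k 1)) :=
    fun i j => ⟨_, (differentiableAt_pi.1 (differentiableAt_pi.1 hμx i) j).hasFDerivAt,
      fun _ => rfl⟩
  have hbR : HasPD β x (gradR β x) := ⟨_, hβx.hasFDerivAt, fun _ => rfl⟩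
  have hp := fun i j => (hpR i j).ofReal
  have hq := fun i j => (hqR i j).ofReal
  have hb := hbR.ofReal
  -- composite scalar fields
  have hdE := HasPD.sum Finset.univ (fun j _ => (hA j).mul (HasPD.coord (x := x) j))
  have hdH := HasPD.sum Finset.univ (fun j _ => (hB j).mul (HasPD.coord (x := x) j))
  have hmape := fun i : Fin 3 =>
    HasPD.sum Finset.univ (fun j _ => (hp i j).mul ((hA j).conj))
  have hmapm := fun i : Fin 3 =>
    HasPD.sum Finset.univ (fun j _ => (hq i j).mul ((hB j).conj))
  have hqe := HasPD.sum Finset.univ (fun i _ =>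
    (HasPD.sum Finset.univ (fun j _ => (hp i j).mul (hA j))).mul ((hA i).conj))
  have hqm := HasPD.sum Finset.univ (fun i _ =>
    (HasPD.sum Finset.univ (fun j _ => (hq i j).mul (hB j))).mul ((hB i).conj))
  have hcE0 := (((hA 1).mul ((hB 2).conj)).sub ((hA 2).mul ((hB 1).conj)))
  have hcE1 := (((hA 2).mul ((hB 0).conj)).sub ((hA 0).mul ((hB 2).conj)))
  have hcE2 := (((hA 0).mul ((hB 1).conj)).sub ((hA 1).mul ((hB 0).conj)))
  have hf0 := ((((hdE.mul (hmape 0)).add (hdH.mul (hmapm 0))).add (hb.mul hcE0)).two_re.sub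
      (hqe.mul (HasPD.coord 0))).sub (hqm.mul (HasPD.coord 0))
  have hf1 := ((((hdE.mul (hmape 1)).add (hdH.mul (hmapm 1))).add (hb.mul hcE1)).two_re.sub
      (hqe.mul (HasPD.coord 1))).sub (hqm.mul (HasPD.coord 1))
  have hf2 := ((((hdE.mul (hmape 2)).add (hdH.mul (hmapm 2))).add (hb.mul hcE2)).two_re.sub
      (hqe.mul (HasPD.coord 2))).sub (hqm.mul (HasPD.coord 2))
  have hdivMe := divg_eq3 (fun y => mapp (ε y) (cjv (E y))) (hmape 0) (hmape 1) (hmape 2)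
  have hdivMm := divg_eq3 (fun y => mapp (μ y) (cjv (H y))) (hmapm 0) (hmapm 1) (hmapm 2)
  have hdivF := divg_eq3 (fun y i =>
            ((2 * (dotc (E y) (toC y) * mapp (ε y) (cjv (E y)) i
                    + dotc (H y) (toC y) * mapp (μ y) (cjv (H y)) i
                    + (β y : ℂ) * crossProduct (E y) (cjv (H y)) i).re : ℝ) : ℂ)
              - qf (ε y) (E y) (E y) * (y i : ℂ)
              - qf (μ y) (H y) (H y) * (y i : ℂ)) hf0 hf1 hf2
  have hεxx : ∀ i j, fderiv ℝ ε x x i j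
      = ∑ k, x k * fderiv ℝ (fun y => ε y i j) x (Pi.single k 1) := by
    intro i j
    rw [fderiv_pi (fun i => differentiableAt_pi.1 hεx i)]
    simp only [ContinuousLinearMap.pi_apply]
    rw [fderiv_pi (fun j => differentiableAt_pi.1 (differentiableAt_pi.1 hεx i) j)]
    simp only [ContinuousLinearMap.pi_apply]
    rw [clm_apply_vec]
    simp [smul_eq_mul]
  have hμxx : ∀ i j, fderiv ℝ μ x x i j
      = ∑ k, x k * fderiv ℝ (fun y => μ y i j) x (Pi.single k 1) := by
    intro i j
    rw [fderiv_pi (fun i => differentiableAt_pi.1 hμx i)]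
    simp only [ContinuousLinearMap.pi_apply]
    rw [fderiv_pi (fun j => differentiableAt_pi.1 (differentiableAt_pi.1 hμx i) j)]
    simp only [ContinuousLinearMap.pi_apply]
    rw [clm_apply_vec]
    simp [smul_eq_mul]
  have hsE := hεsym x hx
  have hsM := hμsym x hx
  rw [hdivF, hdivMe, hdivMm]
  simp only [dotc, qf, mapp, cjv, toC, gradR, curl3, pdv_comp hA, pdv_comp hB, cross_apply,
    Fin.sum_univ_three, hεxx, hμxx]
  norm_num [Matrix.cons_val_zero, Matrix.cons_val_one, Matrix.head_cons, Fin.isValue]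
  rw [hsE 1 0, hsE 2 0, hsE 2 1, hsM 1 0, hsM 2 0, hsM 2 1]
  apply Complex.ext <;>
    simp [Complex.mul_re, Complex.mul_im, Complex.add_re, Complex.add_im,
      Complex.sub_re, Complex.sub_im] <;>
    ring
end
end

section
/- For complex vectors E, H ∈ C^3, a unit vector x̂ ∈ R^3, and positive real constants ε₀, μ₀: −2√(ε₀μ₀) Re{x̂·(E×H̄)} = (1/(2μ₀))|μ₀ H×x̂ − √(ε₀μ₀) E|² + (1/(2ε₀))|ε₀ x̂×E − √(ε₀μ₀) H|² − (ε₀/2)(|E|² + |E×x̂|²) − (μ₀/2)(|H|² + |H×x̂|²). -/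
open scoped BigOperators
open Complex

noncomputable section

/-- the algebraic identity behind the second Morawetz identity. -/
theorem stmt5 (ε₀ μ₀ : ℝ) (hε : 0 < ε₀) (hμ : 0 < μ₀)
    (E H : V3) (xh : Fin 3 → ℝ) (hx : ∑ i, xh i ^ 2 = 1) :
    -2 * Real.sqrt (ε₀ * μ₀) * (dotc (toC xh) (crossProduct E (cjv H))).re
    = (1 / (2 * μ₀)) *
        n2 (fun i => (μ₀ : ℂ) * crossProduct H (toC xh) i - (Real.sqrt (ε₀ * μ₀) : ℂ) * E i)
      + (1 / (2 * ε₀)) *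
        n2 (fun i => (ε₀ : ℂ) * crossProduct (toC xh) E i - (Real.sqrt (ε₀ * μ₀) : ℂ) * H i)
      - (ε₀ / 2) * (n2 E + n2 (crossProduct E (toC xh)))
      - (μ₀ / 2) * (n2 H + n2 (crossProduct H (toC xh))) := by
  have hs : Real.sqrt (ε₀ * μ₀) ^ 2 = ε₀ * μ₀ := Real.sq_sqrt (by positivity)
  set s := Real.sqrt (ε₀ * μ₀) with hsdef
  simp only [dotc, toC, cjv, n2, cross_apply, Fin.sum_univ_three,
    Matrix.cons_val_zero, Matrix.cons_val_one, Matrix.head_cons, Matrix.cons_val_two,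
    Matrix.tail_cons, Complex.normSq_apply, Complex.sub_re, Complex.sub_im,
    Complex.mul_re, Complex.mul_im, Complex.add_re, Complex.add_im,
    Complex.ofReal_re, Complex.ofReal_im, map_sub, map_mul, Complex.conj_re,
    Complex.conj_im]
  field_simp
  linear_combination (-1:ℝ) * (((E 0).re^2+(E 0).im^2+(E 1).re^2+(E 1).im^2+(E 2).re^2+(E 2).im^2)*ε₀
    + ((H 0).re^2+(H 0).im^2+(H 1).re^2+(H 1).im^2+(H 2).re^2+(H 2).im^2)*μ₀) * hs
end
end

section
/- Let v ∈ C^3, α ∈ SPD(3), x ∈ R^3, and n̂ ∈ R^3 a unit vector with x·n̂ > 0. With v_N := (v·n̂)n̂, v_T := v − v_N, x_T := x − (x·n̂)n̂, and |α| the operator norm, one has −2Re{(v_T·x_T)(α v̄·n̂)} ≤ (2|x_T| + |x_T|²/(x·n̂))|α||v_T|² + (x·n̂)(α v_N·v̄_N). -/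
open scoped BigOperators
open Complex

noncomputable section

/-- Euclidean norm of a real 3-vector. -/
def rnorm (y : Fin 3 → ℝ) : ℝ := Real.sqrt (∑ i, y i ^ 2)

lemma abs_dotc_le (a b : V3) :
    ‖dotc a b‖ ≤ Real.sqrt (n2 a) * Real.sqrt (n2 b) := by
  have h1 : ‖dotc a b‖ ≤ ∑ i, ‖a i‖ * ‖b i‖ := by
    refine (norm_sum_le _ _).trans_eq ?_
    simp [norm_mul]
  refine h1.trans ?_
  have := Real.sum_mul_le_sqrt_mul_sqrt Finset.univ
    (fun i => ‖a i‖) (fun i => ‖b i‖)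
  simpa [n2, Complex.sq_norm] using this

/-- pointwise boundary estimate used for the impedance problem.  The operator
norm `|α|` is represented by any constant `Cα ≥ 0` bounding the operator norm of `α`. -/
theorem stmt14 (α : Fin 3 → Fin 3 → ℝ) (hsym : IsSymm3 α) (hpos : IsPos3 α)
    (Cα : ℝ) (hCα : 0 ≤ Cα) (hb : ∀ u : V3, n2 (mapp α u) ≤ Cα ^ 2 * n2 u)
    (v : V3) (x n : Fin 3 → ℝ) (hn : ∑ i, n i ^ 2 = 1) (hxn : 0 < ∑ i, x i * n i) :
    let vN : V3 := fun i => dotc v (toC n) * (n i : ℂ)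
    let vT : V3 := fun i => v i - vN i
    let xT : Fin 3 → ℝ := fun i => x i - (∑ j, x j * n j) * n i ;
    -2 * (dotc vT (toC xT) * dotc (mapp α (cjv v)) (toC n)).re
      ≤ (2 * rnorm xT + rnorm xT ^ 2 / (∑ i, x i * n i)) * Cα * n2 vT
        + (∑ i, x i * n i) * (qf α vN vN).re := by
  intro vN vT xT
  set s : ℝ := ∑ i, x i * n i with hs
  set c : ℂ := dotc v (toC n) with hc
  set A : ℂ := dotc vT (toC xT) with hA
  set B : ℂ := dotc (mapp α (cjv vT)) (toC n) with hB
  set q : ℝ := ∑ i, (∑ j, α i j * n j) * n i with hq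
  -- basic norms
  have hnn : n2 (toC n) = 1 := by
    simpa [n2, toC, Complex.normSq_ofReal, ← pow_two] using hn
  have hxTn : Real.sqrt (n2 (toC xT)) = rnorm xT := by
    simp [n2, toC, rnorm, Complex.normSq_ofReal, ← pow_two]
  have hcjn : ∀ w : V3, n2 (cjv w) = n2 w := by
    intro w; simp [n2, cjv, Complex.normSq_conj]
  -- D is real
  have hD : dotc (mapp α (toC n)) (toC n) = (q : ℂ) := by
    simp [dotc, mapp, toC, hq]
  -- decomposition
  have hdec : dotc (mapp α (cjv v)) (toC n) = B + (starRingEnd ℂ) c * (q : ℂ) := by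
    rw [← hD]
    simp only [hB, hc, dotc, mapp, cjv, toC, vT, vN, map_sub, map_mul, map_sum,
      Complex.conj_ofReal, Fin.sum_univ_three]
    ring
  -- qf α vN vN
  have hqf : qf α vN vN = ((Complex.normSq c : ℝ) : ℂ) * (q : ℂ) := by
    rw [← Complex.mul_conj, ← hD]
    simp only [qf, mapp, dotc, cjv, toC, vN, hc, map_mul, map_sum, Complex.conj_ofReal,
      Fin.sum_univ_three]
    ring
  have hqfre : (qf α vN vN).re = Complex.normSq c * q := by
    rw [hqf]; simp [← Complex.ofReal_mul]
  -- positivity facts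
  have hT : 0 ≤ rnorm xT := Real.sqrt_nonneg _
  have hm0 : 0 ≤ n2 vT := Finset.sum_nonneg fun i _ => Complex.normSq_nonneg _
  set m : ℝ := n2 vT with hm
  set sm : ℝ := Real.sqrt m with hsm
  have hsm2 : sm ^ 2 = m := Real.sq_sqrt hm0
  have hsm0 : 0 ≤ sm := Real.sqrt_nonneg _
  have hq0 : 0 < q := by
    have hne : toC n ≠ 0 := by
      intro h
      have h0 : ∀ i, n i = 0 := by
        intro i
        have := congrFun h i
        simpa [toC] using this
      simp [h0] at hn
    have hp := hpos (toC n) hne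
    have hqfn : qf α (toC n) (toC n) = (q : ℂ) := by
      rw [← hD]; simp [qf, dotc, toC, Complex.conj_ofReal]
    rw [hqfn] at hp; simpa using hp
  have hqC : q ≤ Cα := by
    have h1 : q ≤ ‖dotc (mapp α (toC n)) (toC n)‖ := by
      rw [hD, Complex.norm_real, Real.norm_eq_abs]; exact le_abs_self q
    have h2 := abs_dotc_le (mapp α (toC n)) (toC n)
    have h3 : n2 (mapp α (toC n)) ≤ Cα ^ 2 := by simpa [hnn] using hb (toC n)
    have h4 : Real.sqrt (n2 (mapp α (toC n))) ≤ Cα := by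
      calc Real.sqrt (n2 (mapp α (toC n))) ≤ Real.sqrt (Cα ^ 2) := Real.sqrt_le_sqrt h3
        _ = Cα := Real.sqrt_sq hCα
    calc q ≤ _ := h1
      _ ≤ _ := h2
      _ = Real.sqrt (n2 (mapp α (toC n))) := by rw [hnn, Real.sqrt_one, mul_one]
      _ ≤ Cα := h4
  have hAb : ‖A‖ ≤ rnorm xT * sm := by
    have h := abs_dotc_le vT (toC xT)
    rw [hxTn] at h
    calc ‖A‖ ≤ _ := h
      _ = rnorm xT * sm := by rw [mul_comm]
  have hBb : ‖B‖ ≤ Cα * sm := by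
    have h := abs_dotc_le (mapp α (cjv vT)) (toC n)
    have h3 : n2 (mapp α (cjv vT)) ≤ Cα ^ 2 * m := by simpa [hcjn] using hb (cjv vT)
    have h4 : Real.sqrt (n2 (mapp α (cjv vT))) ≤ Cα * sm := by
      calc Real.sqrt (n2 (mapp α (cjv vT))) ≤ Real.sqrt (Cα ^ 2 * m) := Real.sqrt_le_sqrt h3
        _ = Cα * sm := by rw [Real.sqrt_mul (sq_nonneg _), Real.sqrt_sq hCα]
    calc ‖B‖ ≤ _ := h
      _ = Real.sqrt (n2 (mapp α (cjv vT))) := by rw [hnn, Real.sqrt_one, mul_one]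
      _ ≤ Cα * sm := h4
  -- rewrite the goal
  rw [hdec, hqfre]
  have hre1 : (A * (B + (starRingEnd ℂ) c * (q : ℂ))).re
      = (A * B).re + (A * (starRingEnd ℂ) c).re * q := by
    have h : A * (B + (starRingEnd ℂ) c * (q : ℂ))
        = A * B + (A * (starRingEnd ℂ) c) * (q : ℂ) := by ring
    rw [h, Complex.add_re, Complex.mul_re]
    simp
  rw [hre1]
  set a : ℝ := ‖A‖ with ha'
  set b : ℝ := ‖c‖ with hb'
  have ha0 : 0 ≤ a := norm_nonneg A
  have hb0 : 0 ≤ b := norm_nonneg c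
  have key1 : -2 * (A * B).re ≤ 2 * rnorm xT * Cα * m := by
    have h1 : -(A * B).re ≤ ‖A * B‖ := by
      have := Complex.abs_re_le_norm (A * B)
      cases abs_le.mp this with | intro l r => linarith
    have h2 : ‖A * B‖ = a * ‖B‖ := by rw [norm_mul]
    have h3 : a * ‖B‖ ≤ (rnorm xT * sm) * (Cα * sm) :=
      mul_le_mul hAb hBb (norm_nonneg B) (by positivity)
    have h4 : (rnorm xT * sm) * (Cα * sm) = rnorm xT * Cα * m := by
      rw [← hsm2]; ring
    linarith
  have hb2 : -(A * (starRingEnd ℂ) c).re ≤ a * b := by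
    have h1 := Complex.abs_re_le_norm (A * (starRingEnd ℂ) c)
    have h2 : ‖A * (starRingEnd ℂ) c‖ = a * b := by
      rw [norm_mul, Complex.norm_conj]
    cases abs_le.mp h1 with | intro l r => linarith
  have young : 2 * (a * b) ≤ a ^ 2 / s + s * b ^ 2 := by
    have hid : a ^ 2 / s + s * b ^ 2 - 2 * (a * b) = (a - s * b) ^ 2 / s := by
      field_simp; ring
    have hnn2 : 0 ≤ (a - s * b) ^ 2 / s := div_nonneg (sq_nonneg _) hxn.le
    linarith
  have ha2 : a ^ 2 ≤ rnorm xT ^ 2 * m := by nlinarith [hAb]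
  have h1q : a ^ 2 * q ≤ rnorm xT ^ 2 * m * Cα := by
    have i1 : a ^ 2 * q ≤ rnorm xT ^ 2 * m * q :=
      mul_le_mul_of_nonneg_right ha2 hq0.le
    have i2 : rnorm xT ^ 2 * m * q ≤ rnorm xT ^ 2 * m * Cα :=
      mul_le_mul_of_nonneg_left hqC (by positivity)
    linarith
  have step3 : a ^ 2 / s * q ≤ rnorm xT ^ 2 / s * Cα * m := by
    calc a ^ 2 / s * q = a ^ 2 * q / s := by ring
      _ ≤ rnorm xT ^ 2 * m * Cα / s := (div_le_div_iff_of_pos_right hxn).mpr h1q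
      _ = rnorm xT ^ 2 / s * Cα * m := by ring
  have hbsq : b ^ 2 = Complex.normSq c := Complex.sq_norm c
  have key2 : -2 * (A * (starRingEnd ℂ) c).re * q
      ≤ rnorm xT ^ 2 / s * Cα * m + s * (Complex.normSq c * q) := by
    have s1 : -2 * (A * (starRingEnd ℂ) c).re * q ≤ 2 * (a * b) * q := by
      have h0 : -2 * (A * (starRingEnd ℂ) c).re ≤ 2 * (a * b) := by linarith
      exact mul_le_mul_of_nonneg_right h0 hq0.le
    have s2 : 2 * (a * b) * q ≤ (a ^ 2 / s) * q + s * b ^ 2 * q := by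
      have h0 := mul_le_mul_of_nonneg_right young hq0.le
      linarith
    have s3 : s * b ^ 2 * q = s * (Complex.normSq c * q) := by rw [← hbsq]; ring
    linarith
  linarith
end
end
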